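/- Let L be a first-order language, F a nonempty finite flock of sets of L-sentences, and A an L-sentence not appearing in F (A ∉ ⋃₀ F). Let F + A = {Δ ∪ {A} | Δ ∈ F}, and for a finite nonempty flock G let Bel(G) = ⋂ of Th(Δ) over the ⊆-maximal elements Δ of G (the belief set of the epistemic state generated by G). Then Bel(F + A) = Th(Bel(F) ∪ {A}), i.e. the belief set of the pure expansion of the flock-generated epistemic state by A is obtained by adding A to the original belief set and closing under semantic consequence. -/
import Mathlib

open FirstOrder FirstOrder.Language

/-- The set of semantic consequences of a first-order theory. -/
def Th {L : FirstOrder.Language} (T : L.Theory) : L.Theory :=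
  {φ : L.Sentence | T ⊨ᵇ φ}

/-- The belief set of the epistemic state generated by a flock `G` of sets of
sentences: the intersection of the consequence sets of the `⊆`-maximal members
of `G`. -/
def Bel {L : FirstOrder.Language} (G : Set (Set L.Sentence)) : L.Theory :=
  ⋂₀ ((fun Δ : Set L.Sentence => Th Δ) '' {Δ : Set L.Sentence | Maximal (· ∈ G) Δ})

/-- The expansion of a flock `F` by a sentence `A`: add `A` to every base. -/
def flockExpand {L : FirstOrder.Language} (F : Set (Set L.Sentence)) (A : L.Sentence) :
    Set (Set L.Sentence) :=
  {Θ : Set L.Sentence | ∃ Δ ∈ F, Θ = Δ ∪ {A}}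

universe u v

/-- A semantic consequence of `T` holds in any bundled model of `T`. -/
lemma realize_of_models' {L : FirstOrder.Language.{u, v}} {T : L.Theory} {φ : L.Sentence}
    (h : T ⊨ᵇ φ) (M : Theory.ModelType.{u, v, max u v} T) : M ⊨ φ :=
  Theory.models_sentence_iff.1 h M

/-- Realization of a finite disjunction of sentences. -/
lemma realize_foldr_sup_sentence {L : FirstOrder.Language} (l : List L.Sentence)
    (N : Type*) [L.Structure N] :
    N ⊨ (l.foldr (· ⊔ ·) ⊥ : L.Sentence) ↔ ∃ ρ ∈ l, N ⊨ ρ := by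
  simpa [Sentence.Realize, Formula.Realize] using
    BoundedFormula.realize_foldr_sup (M := N) l default default

/-- Membership in the belief set of a flock. -/
lemma mem_Bel_iff {L : FirstOrder.Language} (G : Set (Set L.Sentence)) (ψ : L.Sentence) :
    ψ ∈ Bel G ↔ ∀ Δ : Set L.Sentence, Maximal (· ∈ G) Δ → (Δ : L.Theory) ⊨ᵇ ψ := by
  constructor
  · intro h Δ hΔ
    exact h (Th Δ) ⟨Δ, hΔ, rfl⟩
  · rintro h T ⟨Δ, hΔ, rfl⟩
    exact h Δ hΔ

/-- For a nonempty finite flock `F` of sets of sentences and a sentence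
`A` not appearing in `F`, the belief set of the pure expansion of the flock-generated
epistemic state by `A` equals the closure of the original belief set together with
`A`: `Bel (F + A) = Th (Bel F ∪ {A})`. -/
theorem bel_flock_expansion (L : FirstOrder.Language) (F : Set (Set L.Sentence))
    (hfin : F.Finite) (hne : F.Nonempty) (A : L.Sentence) (hA : A ∉ ⋃₀ F) :
    Bel (flockExpand F A) = Th (Bel F ∪ {A}) := by
  classical
  have hAn : ∀ Δ ∈ F, A ∉ Δ := fun Δ hΔ hAΔ => hA ⟨Δ, hΔ, hAΔ⟩
  have hsub : ∀ Δ ∈ F, ∀ Δ' ∈ F, Δ ∪ {A} ⊆ Δ' ∪ {A} → Δ ⊆ Δ' := by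
    intro Δ hΔ Δ' hΔ' h x hx
    rcases h (Set.mem_union_left _ hx) with h' | h'
    · exact h'
    · exact absurd hx (by rw [Set.mem_singleton_iff.1 h']; exact hAn Δ hΔ)
  -- the maximal elements of the expanded flock are exactly the `Δ ∪ {A}` for maximal `Δ`
  have hmaxiff : ∀ Θ : Set L.Sentence,
      Maximal (· ∈ flockExpand F A) Θ ↔ ∃ Δ, Maximal (· ∈ F) Δ ∧ Θ = Δ ∪ {A} := by
    intro Θ
    constructor
    · rintro ⟨⟨Δ, hΔF, rfl⟩, hmax⟩
      refine ⟨Δ, ⟨hΔF, ?_⟩, rfl⟩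
      intro Δ' hΔ' hle
      have h1 : (Δ : Set L.Sentence) ∪ {A} ⊆ Δ' ∪ {A} := Set.union_subset_union_left _ hle
      have h2 := hmax (y := Δ' ∪ {A}) ⟨Δ', hΔ', rfl⟩ h1
      exact hsub Δ' hΔ' Δ hΔF h2
    · rintro ⟨Δ, ⟨hΔF, hmax⟩, rfl⟩
      refine ⟨⟨Δ, hΔF, rfl⟩, ?_⟩
      rintro Θ' ⟨Δ', hΔ', rfl⟩ hle
      have h1 : Δ ⊆ Δ' := hsub Δ hΔF Δ' hΔ' hle
      exact Set.union_subset_union_left _ (hmax hΔ' h1)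
  -- the set of maximal elements of `F`
  set S : Set (Set L.Sentence) := {Δ | Maximal (· ∈ F) Δ} with hS
  have hSfin : S.Finite := hfin.subset fun Δ hΔ => hΔ.1
  ext φ
  constructor
  · -- hard direction
    intro hφ
    have h' : ∀ Δ : Set L.Sentence, Maximal (· ∈ F) Δ → (Δ ∪ {A} : L.Theory) ⊨ᵇ φ :=
      fun Δ hΔ => (mem_Bel_iff _ φ).1 hφ _ ((hmaxiff _).2 ⟨Δ, hΔ, rfl⟩)
    show (Bel F ∪ {A} : L.Theory) ⊨ᵇ φ
    rw [Theory.models_sentence_iff]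
    intro M
    haveI hMmod : M.Carrier ⊨ (Bel F ∪ {A} : L.Theory) := M.is_model
    haveI hBel : M.Carrier ⊨ Bel F := Theory.Model.mono hMmod Set.subset_union_left
    -- find a maximal `Δ₀` all of whose consequences hold in `M`
    have key : ∃ Δ₀ ∈ S, ∀ ψ : L.Sentence, (Δ₀ : L.Theory) ⊨ᵇ ψ → M ⊨ ψ := by
      by_contra hcon
      push_neg at hcon
      choose ψ hψ1 hψ2 using hcon
      set l : List L.Sentence :=
        hSfin.toFinset.attach.toList.map
          (fun Δ => ψ Δ.1 (hSfin.mem_toFinset.1 Δ.2)) with hl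
      set χ : L.Sentence := l.foldr (· ⊔ ·) ⊥ with hχ
      have hχBel : χ ∈ Bel F := by
        rw [mem_Bel_iff]
        intro Δ hΔmax
        rw [Theory.models_sentence_iff]
        intro N
        have hmem : ψ Δ hΔmax ∈ l := by
          rw [hl]
          refine List.mem_map.2 ⟨⟨Δ, hSfin.mem_toFinset.2 hΔmax⟩, ?_, rfl⟩
          rw [Finset.mem_toList]
          exact Finset.mem_attach _ _
        exact (realize_foldr_sup_sentence l N).2
          ⟨ψ Δ hΔmax, hmem, realize_of_models' (hψ1 Δ hΔmax) N⟩
      have hMχ : M ⊨ χ := Theory.realize_sentence_of_mem (T := Bel F) hχBel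
      obtain ⟨ρ, hρl, hρ⟩ := (realize_foldr_sup_sentence l M).1 hMχ
      rw [hl] at hρl
      obtain ⟨⟨Δ, hΔ⟩, _, rfl⟩ := List.mem_map.1 hρl
      exact hψ2 Δ (hSfin.mem_toFinset.1 hΔ) hρ
    obtain ⟨Δ₀, hΔ₀, hM0⟩ := key
    haveI hMmodel : M.Carrier ⊨ (Δ₀ ∪ {A} : L.Theory) := by
      rw [Theory.model_iff]
      intro χ hχ
      rcases hχ with hχ | hχ
      · exact hM0 χ (Theory.models_sentence_of_mem hχ)
      · rw [Set.mem_singleton_iff.1 hχ]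
        exact Theory.realize_sentence_of_mem (T := Bel F ∪ {A}) (Set.mem_union_right _ rfl)
    exact realize_of_models' (h' Δ₀ hΔ₀) (Theory.ModelType.of _ M.Carrier)
  · -- easy direction
    intro hφ
    have hφ' : (Bel F ∪ {A} : L.Theory) ⊨ᵇ φ := hφ
    rw [mem_Bel_iff]
    intro Θ hΘ
    obtain ⟨Δ₀, hΔ₀max, rfl⟩ := (hmaxiff Θ).1 hΘ
    rw [Theory.models_sentence_iff]
    intro M
    haveI hMmod : M.Carrier ⊨ (Δ₀ ∪ {A} : L.Theory) := M.is_model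
    haveI hMΔ : M.Carrier ⊨ (Δ₀ : L.Theory) := Theory.Model.mono hMmod Set.subset_union_left
    haveI hMBel : M.Carrier ⊨ (Bel F ∪ {A} : L.Theory) := by
      rw [Theory.model_iff]
      intro χ hχ
      rcases hχ with hχ | hχ
      · have hχΔ₀ : (Δ₀ : L.Theory) ⊨ᵇ χ := (mem_Bel_iff F χ).1 hχ Δ₀ hΔ₀max
        exact realize_of_models' hχΔ₀ (Theory.ModelType.of _ M.Carrier)
      · rw [Set.mem_singleton_iff.1 hχ]
        exact Theory.realize_sentence_of_mem (T := Δ₀ ∪ {A}) (Set.mem_union_right _ rfl)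
    exact realize_of_models' hφ' (Theory.ModelType.of _ M.Carrier)
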